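/- arXiv:1306.0439 — 3 statements merged into one kernel-verified Lean document; each statement's English description precedes it below -/
import Mathlib

section
/- If Q(x) = Q(x)* and s(x) = s(x)* for almost every x ∈ ℝ (self-adjoint matrix potential), then the preminimal operator is symmetric: for all (u,f) ∈ G00 and (w,g) ∈ G00, ⟨f,w⟩ = ⟨u,g⟩. In particular the minimal operator L0 (whose graph is the closure of G00) is symmetric. -/
open MeasureTheory Matrix Filter Topology

noncomputable section

abbrev Em (m : ℕ) := EuclideanSpace ℂ (Fin m)

/-- Matrix action on `ℂ^m`. -/
def mv (m : ℕ) (A : Matrix (Fin m) (Fin m) ℂ) (x : Em m) : Em m := WithLp.toLp 2 (A.mulVec x)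

/-- `(u,u1)` is an l-pair with output `f` for the Shin–Zettl data `(Q,s)`. -/
def IsLpair (m : ℕ) (Q s : ℝ → Matrix (Fin m) (Fin m) ℂ)
    (u u1 f : ℝ → Em m) : Prop :=
  LocallyIntegrable f volume ∧ Continuous u ∧ Continuous u1 ∧
  (∀ a x : ℝ, u x = u a + ∫ t in a..x, (mv m (Q t) (u t) + u1 t)) ∧
  (∀ a x : ℝ, u1 x = u1 a +
     ∫ t in a..x, (mv m (s t - Q t ^ 2) (u t) - mv m (Q t) (u1 t) - f t))

/-- `(v,v1)` is an l⁺-pair with output `g`: same with `Q,s` replaced by their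
conjugate transposes. -/
def IsLplusPair (m : ℕ) (Q s : ℝ → Matrix (Fin m) (Fin m) ℂ)
    (v v1 g : ℝ → Em m) : Prop :=
  IsLpair m (fun t => (Q t)ᴴ) (fun t => (s t)ᴴ) v v1 g

/-- `Q` is locally square-integrable (entrywise). -/
def LocL2 (m : ℕ) (Q : ℝ → Matrix (Fin m) (Fin m) ℂ) : Prop :=
  ∀ i j : Fin m, ∀ K : Set ℝ, IsCompact K →
    MemLp (fun x => Q x i j) 2 (volume.restrict K)

/-- `s` is locally integrable (entrywise). -/
def LocL1 (m : ℕ) (s : ℝ → Matrix (Fin m) (Fin m) ℂ) : Prop :=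
  ∀ i j : Fin m, LocallyIntegrable (fun x => s x i j) volume

/-- The `ℂ^m` inner product `(a,b) = ∑ i, aᵢ * conj bᵢ`. -/
def dotc (m : ℕ) (a b : Em m) : ℂ := ∑ i, a i * (starRingEnd ℂ) (b i)

/-- `⟨u,v⟩ = ∫ (u(x), v(x)) dx`. -/
def pairing (m : ℕ) (u v : ℝ → Em m) : ℂ := ∫ x : ℝ, dotc m (u x) (v x)

abbrev L2m (m : ℕ) := Lp (Em m) 2 (volume : Measure ℝ)

/-- The maximal graph `G`. -/
def Gmax (m : ℕ) (Q s : ℝ → Matrix (Fin m) (Fin m) ℂ) : Set (L2m m × L2m m) :=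
  {p | ∃ u u1 f : ℝ → Em m, IsLpair m Q s u u1 f ∧
        u =ᵐ[volume] p.1 ∧ f =ᵐ[volume] p.2}

/-- The preminimal graph `G₀₀`. -/
def G00 (m : ℕ) (Q s : ℝ → Matrix (Fin m) (Fin m) ℂ) : Set (L2m m × L2m m) :=
  {p | ∃ u u1 f : ℝ → Em m, IsLpair m Q s u u1 f ∧ HasCompactSupport u ∧
        u =ᵐ[volume] p.1 ∧ f =ᵐ[volume] p.2}

/-- The maximal graph `G⁺`. -/
def GmaxPlus (m : ℕ) (Q s : ℝ → Matrix (Fin m) (Fin m) ℂ) : Set (L2m m × L2m m) :=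
  {p | ∃ v v1 g : ℝ → Em m, IsLplusPair m Q s v v1 g ∧
        v =ᵐ[volume] p.1 ∧ g =ᵐ[volume] p.2}

/-- The preminimal graph `G₀₀⁺`. -/
def G00Plus (m : ℕ) (Q s : ℝ → Matrix (Fin m) (Fin m) ℂ) : Set (L2m m × L2m m) :=
  {p | ∃ v v1 g : ℝ → Em m, IsLplusPair m Q s v v1 g ∧ HasCompactSupport v ∧
        v =ᵐ[volume] p.1 ∧ g =ᵐ[volume] p.2}

section Aux
open Set

-- Fubini triangle identity with integrability of the pieces
lemma fubini_tri (P R : ℝ → ℂ) (a b : ℝ)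
    (hP : IntegrableOn P (Ioc a b)) (hR : IntegrableOn R (Ioc a b)) :
    IntegrableOn (fun t => P t * ∫ τ in Ioc a t, R τ) (Ioc a b) ∧
    IntegrableOn (fun t => (∫ τ in Ioc a t, P τ) * R t) (Ioc a b) ∧
    (∫ t in Ioc a b, P t) * (∫ t in Ioc a b, R t) =
      (∫ t in Ioc a b, P t * ∫ τ in Ioc a t, R τ) +
      (∫ t in Ioc a b, (∫ τ in Ioc a t, P τ) * R t) := by
  set μ := (volume : Measure ℝ).restrict (Ioc a b) with hμ
  have hS : MeasurableSet {z : ℝ × ℝ | z.1 < z.2} :=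
    (isOpen_lt continuous_fst continuous_snd).measurableSet
  have hS' : MeasurableSet {z : ℝ × ℝ | z.2 < z.1} :=
    (isOpen_lt continuous_snd continuous_fst).measurableSet
  set h : ℝ × ℝ → ℂ := fun z => P z.1 * R z.2 with hh
  have hprod : Integrable h (μ.prod μ) := hP.mul_prod hR
  have hint1 : Integrable ({z : ℝ × ℝ | z.2 < z.1}.indicator h) (μ.prod μ) :=
    hprod.indicator hS'
  have hint2 : Integrable ({z : ℝ × ℝ | z.1 < z.2}.indicator h) (μ.prod μ) :=
    hprod.indicator hS
  -- inner integral computations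
  have hin1 : ∀ t ∈ Ioc a b,
      (∫ τ, ({z : ℝ × ℝ | z.2 < z.1}.indicator h) (t, τ) ∂μ)
        = P t * ∫ τ in Ioc a t, R τ := by
    intro t ht
    have e : ∀ τ : ℝ, ({z : ℝ × ℝ | z.2 < z.1}.indicator h) (t, τ)
        = (Iio t).indicator (fun τ => P t * R τ) τ := by
      intro τ; simp [Set.indicator_apply, hh]
    simp_rw [e]
    rw [hμ, setIntegral_indicator measurableSet_Iio]
    have hinter : Ioc a b ∩ Iio t = Ioo a t := by
      ext τ; constructor
      · rintro ⟨⟨h1, _⟩, h3⟩; exact ⟨h1, h3⟩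
      · rintro ⟨h1, h2⟩; exact ⟨⟨h1, h2.le.trans ht.2⟩, h2⟩
    rw [hinter, ← integral_Ioc_eq_integral_Ioo, integral_const_mul]
  have hin2 : ∀ τ ∈ Ioc a b,
      (∫ t, ({z : ℝ × ℝ | z.1 < z.2}.indicator h) (t, τ) ∂μ)
        = (∫ t in Ioc a τ, P t) * R τ := by
    intro τ hτ
    have e : ∀ t : ℝ, ({z : ℝ × ℝ | z.1 < z.2}.indicator h) (t, τ)
        = (Iio τ).indicator (fun t => P t * R τ) t := by
      intro t; simp [Set.indicator_apply, hh]
    simp_rw [e]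
    rw [hμ, setIntegral_indicator measurableSet_Iio]
    have hinter : Ioc a b ∩ Iio τ = Ioo a τ := by
      ext t; constructor
      · rintro ⟨⟨h1, _⟩, h3⟩; exact ⟨h1, h3⟩
      · rintro ⟨h1, h2⟩; exact ⟨⟨h1, h2.le.trans hτ.2⟩, h2⟩
    rw [hinter, ← integral_Ioc_eq_integral_Ioo, integral_mul_const]
  have hae1 : (fun t => ∫ τ, ({z : ℝ × ℝ | z.2 < z.1}.indicator h) (t, τ) ∂μ)
      =ᵐ[μ] fun t => P t * ∫ τ in Ioc a t, R τ :=
    Filter.eventuallyEq_of_mem (self_mem_ae_restrict measurableSet_Ioc) hin1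
  have hae2 : (fun τ => ∫ t, ({z : ℝ × ℝ | z.1 < z.2}.indicator h) (t, τ) ∂μ)
      =ᵐ[μ] fun τ => (∫ t in Ioc a τ, P t) * R τ :=
    Filter.eventuallyEq_of_mem (self_mem_ae_restrict measurableSet_Ioc) hin2
  have hI1 : IntegrableOn (fun t => P t * ∫ τ in Ioc a t, R τ) (Ioc a b) :=
    hint1.integral_prod_left.congr hae1
  have hI2 : IntegrableOn (fun t => (∫ τ in Ioc a t, P τ) * R t) (Ioc a b) :=
    hint2.integral_prod_right.congr hae2
  refine ⟨hI1, hI2, ?_⟩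
  have hD : (μ.prod μ) {z : ℝ × ℝ | z.1 = z.2} = 0 := by
    have hDm : MeasurableSet {z : ℝ × ℝ | z.1 = z.2} :=
      (isClosed_eq continuous_fst continuous_snd).measurableSet
    rw [Measure.prod_apply hDm]
    have : ∀ t : ℝ, μ (Prod.mk t ⁻¹' {z : ℝ × ℝ | z.1 = z.2}) = 0 := by
      intro t
      have : (Prod.mk t ⁻¹' {z : ℝ × ℝ | z.1 = z.2}) = {t} := by
        ext τ; simp [eq_comm]
      rw [this]
      exact le_antisymm ((Measure.restrict_apply_le _ _).trans (by simp)) bot_le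
    simp [this]
  have hsplit : h =ᵐ[μ.prod μ]
      ({z : ℝ × ℝ | z.2 < z.1}.indicator h + {z : ℝ × ℝ | z.1 < z.2}.indicator h) := by
    have key : ∀ z : ℝ × ℝ, z.1 ≠ z.2 →
        h z = ({z : ℝ × ℝ | z.2 < z.1}.indicator h + {z : ℝ × ℝ | z.1 < z.2}.indicator h) z := by
      intro z hz
      rcases lt_or_gt_of_ne hz with hlt | hgt
      · simp [Set.indicator_apply, hlt, not_lt.2 hlt.le, lt_irrefl]
      · simp [Set.indicator_apply, hgt, not_lt.2 hgt.le, lt_irrefl]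
    have hae : ∀ᵐ z ∂(μ.prod μ), z.1 ≠ z.2 := by
      rw [ae_iff]
      convert hD using 2
      ext z; simp
    filter_upwards [hae] with z hz using key z hz
  have hLHS : (∫ t in Ioc a b, P t) * (∫ t in Ioc a b, R t) = ∫ z, h z ∂(μ.prod μ) :=
    (integral_prod_mul P R).symm
  rw [hLHS, integral_congr_ae hsplit, integral_add' hint1 hint2]
  congr 1
  · rw [integral_prod _ hint1]; exact integral_congr_ae hae1
  · rw [integral_prod_symm _ hint2]; exact integral_congr_ae hae2

-- product rule for absolutely continuous functions given as integrals
lemma prod_rule (P R U W : ℝ → ℂ) (a b : ℝ)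
    (hP : IntegrableOn P (Ioc a b)) (hR : IntegrableOn R (Ioc a b))
    (hU : ∀ x ∈ Icc a b, U x = U a + ∫ t in Ioc a x, P t)
    (hW : ∀ x ∈ Icc a b, W x = W a + ∫ t in Ioc a x, R t)
    (hab : a ≤ b) :
    IntegrableOn (fun t => P t * W t + U t * R t) (Ioc a b) ∧
    U b * W b = U a * W a + ∫ t in Ioc a b, (P t * W t + U t * R t) := by
  obtain ⟨hI1, hI2, hkey⟩ := fubini_tri P R a b hP hR
  have haePW : (fun t => P t * W t)
      =ᵐ[(volume : Measure ℝ).restrict (Ioc a b)]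
      fun t => P t * W a + P t * ∫ τ in Ioc a t, R τ := by
    refine Filter.eventuallyEq_of_mem (self_mem_ae_restrict measurableSet_Ioc) ?_
    intro t ht
    simp only []; rw [hW t ⟨ht.1.le, ht.2⟩]; ring
  have haeUR : (fun t => U t * R t)
      =ᵐ[(volume : Measure ℝ).restrict (Ioc a b)]
      fun t => U a * R t + (∫ τ in Ioc a t, P τ) * R t := by
    refine Filter.eventuallyEq_of_mem (self_mem_ae_restrict measurableSet_Ioc) ?_
    intro t ht
    simp only []; rw [hU t ⟨ht.1.le, ht.2⟩]; ring
  have hPW : IntegrableOn (fun t => P t * W t) (Ioc a b) :=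
    (Integrable.add (hP.mul_const (W a)) hI1).congr haePW.symm
  have hUR : IntegrableOn (fun t => U t * R t) (Ioc a b) :=
    (Integrable.add (hR.const_mul (U a)) hI2).congr haeUR.symm
  refine ⟨hPW.add hUR, ?_⟩
  have e1 : ∫ t in Ioc a b, (P t * W t + U t * R t)
      = (∫ t in Ioc a b, P t * W t) + ∫ t in Ioc a b, U t * R t :=
    integral_add hPW hUR
  have e2 : ∫ t in Ioc a b, P t * W t
      = W a * (∫ t in Ioc a b, P t) + ∫ t in Ioc a b, P t * ∫ τ in Ioc a t, R τ := by
    rw [integral_congr_ae haePW, integral_add (hP.mul_const (W a)) hI1,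
      integral_mul_const, mul_comm]
  have e3 : ∫ t in Ioc a b, U t * R t
      = U a * (∫ t in Ioc a b, R t) + ∫ t in Ioc a b, (∫ τ in Ioc a t, P τ) * R t := by
    rw [integral_congr_ae haeUR, integral_add (hR.const_mul (U a)) hI2,
      integral_const_mul]
  have hU2 := hU b ⟨hab, le_refl b⟩
  have hW2 := hW b ⟨hab, le_refl b⟩
  rw [e1, e2, e3, hU2, hW2]
  linear_combination hkey


lemma MeasureTheory.Integrable.conj' {μ : Measure ℝ} {f : ℝ → ℂ} (hf : Integrable f μ) :
    Integrable (fun t => (starRingEnd ℂ) (f t)) μ := by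
  refine ⟨RCLike.continuous_conj.comp_aestronglyMeasurable hf.1, ?_⟩
  simpa [HasFiniteIntegral] using hf.2

lemma dotc_rule (m : ℕ) (Pv Rv Uv Wv : ℝ → Em m) (a b : ℝ)
    (hP : IntegrableOn Pv (Ioc a b)) (hR : IntegrableOn Rv (Ioc a b))
    (hU : ∀ x ∈ Icc a b, Uv x = Uv a + ∫ t in Ioc a x, Pv t)
    (hW : ∀ x ∈ Icc a b, Wv x = Wv a + ∫ t in Ioc a x, Rv t)
    (hab : a ≤ b) :
    IntegrableOn (fun t => dotc m (Pv t) (Wv t) + dotc m (Uv t) (Rv t)) (Ioc a b) ∧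
    dotc m (Uv b) (Wv b) = dotc m (Uv a) (Wv a) +
      ∫ t in Ioc a b, (dotc m (Pv t) (Wv t) + dotc m (Uv t) (Rv t)) := by
  have comp : ∀ i : Fin m, IntegrableOn (fun t => Pv t i * (starRingEnd ℂ) (Wv t i)
        + Uv t i * (starRingEnd ℂ) (Rv t i)) (Ioc a b) ∧
      Uv b i * (starRingEnd ℂ) (Wv b i) = Uv a i * (starRingEnd ℂ) (Wv a i) +
        ∫ t in Ioc a b, (Pv t i * (starRingEnd ℂ) (Wv t i)
          + Uv t i * (starRingEnd ℂ) (Rv t i)) := by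
    intro i
    have hPi : IntegrableOn (fun t => Pv t i) (Ioc a b) :=
      (EuclideanSpace.proj i : Em m →L[ℂ] ℂ).integrable_comp hP
    have hRi : IntegrableOn (fun t => (starRingEnd ℂ) (Rv t i)) (Ioc a b) :=
      ((EuclideanSpace.proj i : Em m →L[ℂ] ℂ).integrable_comp hR).conj'
    have hproj : ∀ (g : ℝ → Em m) (x : ℝ), IntegrableOn g (Ioc a x) →
        (∫ t in Ioc a x, g t) i = ∫ t in Ioc a x, g t i := by
      intro g x hg
      have := ((EuclideanSpace.proj i : Em m →L[ℂ] ℂ)).integral_comp_comm hg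
      simpa using this.symm
    have hUi : ∀ x ∈ Icc a b, Uv x i = Uv a i + ∫ t in Ioc a x, Pv t i := by
      intro x hx
      have h0 := congrArg (fun v : Em m => v i) (hU x hx)
      simp only [PiLp.add_apply] at h0
      rw [h0, hproj Pv x (hP.mono_set (Ioc_subset_Ioc_right hx.2))]
    have hWi : ∀ x ∈ Icc a b, (starRingEnd ℂ) (Wv x i)
        = (starRingEnd ℂ) (Wv a i) + ∫ t in Ioc a x, (starRingEnd ℂ) (Rv t i) := by
      intro x hx
      have h0 := congrArg (fun v : Em m => (starRingEnd ℂ) (v i)) (hW x hx)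
      simp only [PiLp.add_apply, map_add] at h0
      rw [h0, integral_conj, hproj Rv x (hR.mono_set (Ioc_subset_Ioc_right hx.2))]
    exact prod_rule (fun t => Pv t i) (fun t => (starRingEnd ℂ) (Rv t i))
      (fun t => Uv t i) (fun t => (starRingEnd ℂ) (Wv t i)) a b hPi hRi hUi hWi hab
  have hint : IntegrableOn (fun t => dotc m (Pv t) (Wv t) + dotc m (Uv t) (Rv t)) (Ioc a b) := by
    have : IntegrableOn (fun t => ∑ i : Fin m, (Pv t i * (starRingEnd ℂ) (Wv t i)
        + Uv t i * (starRingEnd ℂ) (Rv t i))) (Ioc a b) :=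
      integrable_finset_sum _ (fun i _ => (comp i).1)
    refine this.congr (Filter.EventuallyEq.of_eq ?_)
    funext t
    simp [dotc, Finset.sum_add_distrib]
  refine ⟨hint, ?_⟩
  have : ∫ t in Ioc a b, (dotc m (Pv t) (Wv t) + dotc m (Uv t) (Rv t))
      = ∑ i : Fin m, ∫ t in Ioc a b, (Pv t i * (starRingEnd ℂ) (Wv t i)
          + Uv t i * (starRingEnd ℂ) (Rv t i)) := by
    rw [← integral_finset_sum _ (fun i _ => (comp i).1)]
    congr 1; funext t; simp [dotc, Finset.sum_add_distrib]
  rw [this]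
  simp only [dotc]
  rw [← Finset.sum_add_distrib]
  exact Finset.sum_congr rfl (fun i _ => (comp i).2)

lemma em_decomp (m : ℕ) (v : Em m) :
    v = ∑ i, v i • (EuclideanSpace.single i (1 : ℂ)) := by
  ext j
  have : (∑ i, v i • (EuclideanSpace.single i (1 : ℂ))) j
      = ∑ i, (v i • (EuclideanSpace.single i (1 : ℂ))) j := by
    induction (Finset.univ : Finset (Fin m)) using Finset.induction_on with
    | empty => simp
    | insert a s hni ih => rw [Finset.sum_insert hni, Finset.sum_insert hni, ← ih]; rfl
  rw [this]
  simp [EuclideanSpace.single_apply]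

lemma integrableOn_of_components {m : ℕ} {g : ℝ → Em m} {S : Set ℝ}
    (h : ∀ i, IntegrableOn (fun t => g t i) S) : IntegrableOn g S := by
  have h2 : IntegrableOn (fun t => ∑ i, g t i • (EuclideanSpace.single i (1 : ℂ))) S :=
    integrable_finset_sum _ (fun i _ => (h i).smul_const _)
  exact h2.congr (Filter.EventuallyEq.of_eq (funext fun t => (em_decomp m (g t)).symm))


lemma lpair_integrable (m : ℕ) (Q s : ℝ → Matrix (Fin m) (Fin m) ℂ)
    (hQ : LocL2 m Q) (hs : LocL1 m s) (u u1 f : ℝ → Em m)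
    (hu : Continuous u) (hu1 : Continuous u1) (hf : LocallyIntegrable f volume) (a b : ℝ) :
    IntegrableOn (fun t => mv m (Q t) (u t) + u1 t) (Ioc a b) ∧
    IntegrableOn (fun t => mv m (s t - Q t ^ 2) (u t) - mv m (Q t) (u1 t) - f t) (Ioc a b) := by
  set K : Set ℝ := Icc a b with hK
  haveI : IsFiniteMeasure ((volume : Measure ℝ).restrict K) :=
    ⟨by rw [Measure.restrict_apply_univ]; exact measure_Icc_lt_top⟩
  -- component continuity and bounds
  have hcomp : ∀ (v : ℝ → Em m), Continuous v → ∀ j : Fin m, Continuous (fun t => v t j) :=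
    fun v hv j => (EuclideanSpace.proj j : Em m →L[ℂ] ℂ).continuous.comp hv
  have hbdd : ∀ (v : ℝ → Em m), Continuous v → ∀ j : Fin m,
      ∃ C : ℝ, ∀ᵐ t ∂((volume : Measure ℝ).restrict K), ‖v t j‖ ≤ C := by
    intro v hv j
    obtain ⟨C, hC⟩ := isCompact_Icc.exists_bound_of_continuousOn (hcomp v hv j).continuousOn
    exact ⟨C, (ae_restrict_iff' measurableSet_Icc).2 (ae_of_all _ hC)⟩
  -- scalar integrabilities on K
  have hQint : ∀ i j : Fin m, IntegrableOn (fun t => Q t i j) K := by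
    intro i j
    exact memLp_one_iff_integrable.mp
      ((hQ i j K isCompact_Icc).mono_exponent (by norm_num))
  have hQQ : ∀ i k j : Fin m, IntegrableOn (fun t => Q t i k * Q t k j) K := by
    intro i k j
    have h2 : MemLp ((fun t => Q t i k) • (fun t => Q t k j)) 1
        ((volume : Measure ℝ).restrict K) := by
      haveI : ENNReal.HolderTriple 2 2 1 := ⟨by rw [inv_one]; exact ENNReal.inv_two_add_inv_two⟩
      exact (hQ k j K isCompact_Icc).smul (hQ i k K isCompact_Icc)
    exact memLp_one_iff_integrable.mp h2
  have hmulbdd : ∀ (g : ℝ → ℂ), IntegrableOn g K → ∀ (v : ℝ → Em m), Continuous v →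
      ∀ j : Fin m, IntegrableOn (fun t => g t * v t j) K := by
    intro g hg v hv j
    obtain ⟨C, hC⟩ := hbdd v hv j
    have := hg.bdd_mul ((hcomp v hv j).aestronglyMeasurable) hC
    exact this.congr (Filter.EventuallyEq.of_eq (funext fun t => mul_comm _ _))
  have hsint : ∀ i j : Fin m, IntegrableOn (fun t => s t i j) K :=
    fun i j => (hs i j).integrableOn_isCompact isCompact_Icc
  have hfi : ∀ i : Fin m, IntegrableOn (fun t => f t i) K :=
    fun i => (EuclideanSpace.proj i : Em m →L[ℂ] ℂ).integrable_comp
      (hf.integrableOn_isCompact isCompact_Icc)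
  have hu1i : ∀ i : Fin m, IntegrableOn (fun t => u1 t i) K :=
    fun i => (hcomp u1 hu1 i).integrableOn_Icc
  constructor
  · refine (integrableOn_of_components ?_).mono_set Ioc_subset_Icc_self
    intro i
    have h1 : IntegrableOn (fun t => (∑ j, Q t i j * u t j) + u1 t i) K :=
      (integrable_finset_sum _ (fun j _ => hmulbdd _ (hQint i j) u hu j)).add (hu1i i)
    refine h1.congr (Filter.EventuallyEq.of_eq (funext fun t => ?_))
    simp [mv, Matrix.mulVec, dotProduct]
  · refine (integrableOn_of_components ?_).mono_set Ioc_subset_Icc_self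
    intro i
    have h1 : IntegrableOn (fun t =>
        ((∑ j, s t i j * u t j) - ∑ j, (∑ k, Q t i k * Q t k j) * u t j)
          - (∑ j, Q t i j * u1 t j) - f t i) K := by
      refine Integrable.sub (Integrable.sub (Integrable.sub ?_ ?_) ?_) (hfi i)
      · exact integrable_finset_sum _ (fun j _ => hmulbdd _ (hsint i j) u hu j)
      · refine integrable_finset_sum _ (fun j _ => ?_)
        have : IntegrableOn (fun t => ∑ k, (Q t i k * Q t k j) * u t j) K :=
          integrable_finset_sum _ (fun k _ => hmulbdd _ (hQQ i k j) u hu j)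
        refine this.congr (Filter.EventuallyEq.of_eq (funext fun t => ?_))
        rw [Finset.sum_mul]
      · exact integrable_finset_sum _ (fun j _ => hmulbdd _ (hQint i j) u1 hu1 j)
    refine h1.congr (Filter.EventuallyEq.of_eq (funext fun t => ?_))
    simp [mv, Matrix.mulVec, dotProduct, Matrix.sub_apply, pow_two, Matrix.mul_apply,
      sub_mul, Finset.sum_sub_distrib, Finset.sum_mul]

lemma dotc_add_left (m : ℕ) (a b c : Em m) : dotc m (a + b) c = dotc m a c + dotc m b c := by
  simp [dotc, add_mul, Finset.sum_add_distrib]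

lemma dotc_sub_left (m : ℕ) (a b c : Em m) : dotc m (a - b) c = dotc m a c - dotc m b c := by
  simp [dotc, sub_mul, Finset.sum_sub_distrib]

lemma dotc_add_right (m : ℕ) (a b c : Em m) : dotc m a (b + c) = dotc m a b + dotc m a c := by
  simp [dotc, mul_add, Finset.sum_add_distrib]

lemma dotc_sub_right (m : ℕ) (a b c : Em m) : dotc m a (b - c) = dotc m a b - dotc m a c := by
  simp [dotc, mul_sub, Finset.sum_sub_distrib]

lemma dotc_mv (m : ℕ) (A : Matrix (Fin m) (Fin m) ℂ) (v w : Em m) :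
    dotc m (mv m A v) w = dotc m v (mv m Aᴴ w) := by
  simp only [dotc, mv, PiLp.toLp_apply, Matrix.mulVec, dotProduct, Matrix.conjTranspose_apply,
    map_sum, _root_.map_mul, Finset.sum_mul, Finset.mul_sum]
  rw [Finset.sum_comm]
  refine Finset.sum_congr rfl fun i _ => Finset.sum_congr rfl fun j _ => ?_
  rw [RCLike.star_def, RCLike.conj_conj]
  ring

lemma lagrange_pointwise (m : ℕ) (Qt st : Matrix (Fin m) (Fin m) ℂ)
    (hQt : Qtᴴ = Qt) (hst : stᴴ = st) (uv u1v fv wv w1v gv : Em m) :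
    (dotc m (mv m Qt uv + u1v) w1v
        + dotc m uv (mv m (st - Qt ^ 2) wv - mv m Qt w1v - gv))
      - (dotc m (mv m (st - Qt ^ 2) uv - mv m Qt u1v - fv) wv
        + dotc m u1v (mv m Qt wv + w1v))
      = dotc m fv wv - dotc m uv gv := by
  have hsub : (st - Qt ^ 2)ᴴ = st - Qt ^ 2 := by
    rw [Matrix.conjTranspose_sub, hst, Matrix.conjTranspose_pow, hQt]
  have h1 : dotc m (mv m Qt uv) w1v = dotc m uv (mv m Qt w1v) := by
    rw [dotc_mv, hQt]
  have h2 : dotc m (mv m (st - Qt ^ 2) uv) wv = dotc m uv (mv m (st - Qt ^ 2) wv) := by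
    rw [dotc_mv, hsub]
  have h3 : dotc m (mv m Qt u1v) wv = dotc m u1v (mv m Qt wv) := by
    rw [dotc_mv, hQt]
  simp only [dotc_add_left, dotc_sub_left, dotc_add_right, dotc_sub_right]
  rw [h1, h2, h3]
  ring

lemma dotc_integrableOn_locInt_cont (m : ℕ) (F v : ℝ → Em m)
    (hF : LocallyIntegrable F volume) (hv : Continuous v) (a b : ℝ) :
    IntegrableOn (fun t => dotc m (F t) (v t)) (Ioc a b) ∧
    IntegrableOn (fun t => dotc m (v t) (F t)) (Ioc a b) := by
  set K : Set ℝ := Icc a b with hK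
  have hcomp : ∀ j : Fin m, Continuous (fun t => v t j) :=
    fun j => (EuclideanSpace.proj j : Em m →L[ℂ] ℂ).continuous.comp hv
  have hbdd : ∀ j : Fin m,
      ∃ C : ℝ, ∀ᵐ t ∂((volume : Measure ℝ).restrict K), ‖v t j‖ ≤ C := by
    intro j
    obtain ⟨C, hC⟩ := isCompact_Icc.exists_bound_of_continuousOn (hcomp j).continuousOn
    exact ⟨C, (ae_restrict_iff' measurableSet_Icc).2 (ae_of_all _ hC)⟩
  have hFi : ∀ i : Fin m, IntegrableOn (fun t => F t i) K :=
    fun i => (EuclideanSpace.proj i : Em m →L[ℂ] ℂ).integrable_comp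
      (hF.integrableOn_isCompact isCompact_Icc)
  constructor
  · refine IntegrableOn.mono_set ?_ Ioc_subset_Icc_self
    have h1 : IntegrableOn (fun t => ∑ i, F t i * (starRingEnd ℂ) (v t i)) K := by
      refine integrable_finset_sum _ (fun i _ => ?_)
      obtain ⟨C, hC⟩ := hbdd i
      have hCc : ∀ᵐ t ∂((volume : Measure ℝ).restrict K), ‖(starRingEnd ℂ) (v t i)‖ ≤ C := by
        filter_upwards [hC] with t ht; simpa using ht
      have := (hFi i).bdd_mul
        (RCLike.continuous_conj.comp_aestronglyMeasurable (hcomp i).aestronglyMeasurable) hCc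
      exact this.congr (Filter.EventuallyEq.of_eq (funext fun t => mul_comm _ _))
    exact h1.congr (Filter.EventuallyEq.of_eq (funext fun t => rfl))
  · refine IntegrableOn.mono_set ?_ Ioc_subset_Icc_self
    have h1 : IntegrableOn (fun t => ∑ i, v t i * (starRingEnd ℂ) (F t i)) K := by
      refine integrable_finset_sum _ (fun i _ => ?_)
      obtain ⟨C, hC⟩ := hbdd i
      exact ((hFi i).conj').bdd_mul (hcomp i).aestronglyMeasurable hC
    exact h1.congr (Filter.EventuallyEq.of_eq (funext fun t => rfl))


lemma core_sym (m : ℕ) (Q s : ℝ → Matrix (Fin m) (Fin m) ℂ)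
    (hQ : LocL2 m Q) (hs : LocL1 m s)
    (hQsa : ∀ᵐ x : ℝ ∂(volume), (Q x)ᴴ = Q x)
    (hssa : ∀ᵐ x : ℝ ∂(volume), (s x)ᴴ = s x)
    (u u1 f w w1 g : ℝ → Em m)
    (hlu : IsLpair m Q s u u1 f) (hlw : IsLpair m Q s w w1 g)
    (hcu : HasCompactSupport u) (hcw : HasCompactSupport w) :
    ∫ x, dotc m (f x) (w x) = ∫ x, dotc m (u x) (g x) := by
  obtain ⟨hfl, hucont, hu1cont, hueq, hu1eq⟩ := hlu
  obtain ⟨hgl, hwcont, hw1cont, hweq, hw1eq⟩ := hlw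
  -- choose a big interval
  obtain ⟨r, hr⟩ := (hcu.union hcw).isBounded.subset_closedBall 0
  set a : ℝ := -(|r| + 1) with ha
  set b : ℝ := |r| + 1 with hb
  have hab : a ≤ b := by
    rw [ha, hb]; have := abs_nonneg r; linarith
  have hball : Metric.closedBall (0 : ℝ) r ⊆ Ioo a b := by
    intro x hx
    rw [Metric.mem_closedBall, Real.dist_eq, sub_zero] at hx
    have h1 : -|r| ≤ x := neg_le_of_abs_le (hx.trans (le_abs_self r))
    have h2 : x ≤ |r| := le_of_abs_le (hx.trans (le_abs_self r))
    exact ⟨by rw [ha]; linarith, by rw [hb]; linarith⟩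
  have hsupu : tsupport u ⊆ Ioo a b := (subset_union_left.trans hr).trans hball
  have hsupw : tsupport w ⊆ Ioo a b := (subset_union_right.trans hr).trans hball
  have hua : u a = 0 := image_eq_zero_of_notMem_tsupport (fun h => (hsupu h).1.false)
  have hub : u b = 0 := image_eq_zero_of_notMem_tsupport (fun h => (hsupu h).2.false)
  have hwa : w a = 0 := image_eq_zero_of_notMem_tsupport (fun h => (hsupw h).1.false)
  have hwb : w b = 0 := image_eq_zero_of_notMem_tsupport (fun h => (hsupw h).2.false)
  -- integrability of the integrands
  obtain ⟨hAu, hBu⟩ := lpair_integrable m Q s hQ hs u u1 f hucont hu1cont hfl a b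
  obtain ⟨hAw, hBw⟩ := lpair_integrable m Q s hQ hs w w1 g hwcont hw1cont hgl a b
  -- primitive (Ioc) forms
  have hU : ∀ x ∈ Icc a b, u x = u a + ∫ t in Ioc a x, (mv m (Q t) (u t) + u1 t) := by
    intro x hx; rw [hueq a x, intervalIntegral.integral_of_le hx.1]
  have hU1 : ∀ x ∈ Icc a b, u1 x = u1 a +
      ∫ t in Ioc a x, (mv m (s t - Q t ^ 2) (u t) - mv m (Q t) (u1 t) - f t) := by
    intro x hx; rw [hu1eq a x, intervalIntegral.integral_of_le hx.1]
  have hW : ∀ x ∈ Icc a b, w x = w a + ∫ t in Ioc a x, (mv m (Q t) (w t) + w1 t) := by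
    intro x hx; rw [hweq a x, intervalIntegral.integral_of_le hx.1]
  have hW1 : ∀ x ∈ Icc a b, w1 x = w1 a +
      ∫ t in Ioc a x, (mv m (s t - Q t ^ 2) (w t) - mv m (Q t) (w1 t) - g t) := by
    intro x hx; rw [hw1eq a x, intervalIntegral.integral_of_le hx.1]
  -- the two product rules
  obtain ⟨hint1, heq1⟩ := dotc_rule m _ _ u w1 a b hAu hBw hU hW1 hab
  obtain ⟨hint2, heq2⟩ := dotc_rule m _ _ u1 w a b hBu hAw hU1 hW hab
  have hz1 : ∫ t in Ioc a b, (dotc m (mv m (Q t) (u t) + u1 t) (w1 t)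
      + dotc m (u t) (mv m (s t - Q t ^ 2) (w t) - mv m (Q t) (w1 t) - g t)) = 0 := by
    have : dotc m (u b) (w1 b) = 0 := by rw [hub]; simp [dotc]
    have h0 : dotc m (u a) (w1 a) = 0 := by rw [hua]; simp [dotc]
    rw [this, h0, zero_add] at heq1
    exact heq1.symm
  have hz2 : ∫ t in Ioc a b, (dotc m (mv m (s t - Q t ^ 2) (u t) - mv m (Q t) (u1 t) - f t) (w t)
      + dotc m (u1 t) (mv m (Q t) (w t) + w1 t)) = 0 := by
    have : dotc m (u1 b) (w b) = 0 := by rw [hwb]; simp [dotc]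
    have h0 : dotc m (u1 a) (w a) = 0 := by rw [hwa]; simp [dotc]
    rw [this, h0, zero_add] at heq2
    exact heq2.symm
  -- integrability of the pairings
  obtain ⟨hfw, -⟩ := dotc_integrableOn_locInt_cont m f w hfl hwcont a b
  obtain ⟨-, hug⟩ := dotc_integrableOn_locInt_cont m g u hgl hucont a b
  -- Lagrange identity a.e.
  have hae : (fun t => dotc m (f t) (w t) - dotc m (u t) (g t))
      =ᵐ[(volume : Measure ℝ).restrict (Ioc a b)]
      (fun t => (dotc m (mv m (Q t) (u t) + u1 t) (w1 t)
          + dotc m (u t) (mv m (s t - Q t ^ 2) (w t) - mv m (Q t) (w1 t) - g t))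
        - (dotc m (mv m (s t - Q t ^ 2) (u t) - mv m (Q t) (u1 t) - f t) (w t)
          + dotc m (u1 t) (mv m (Q t) (w t) + w1 t))) := by
    filter_upwards [ae_restrict_of_ae hQsa, ae_restrict_of_ae hssa] with t h1 h2
    exact (lagrange_pointwise m (Q t) (s t) h1 h2 (u t) (u1 t) (f t) (w t) (w1 t) (g t)).symm
  have hIoc : ∫ t in Ioc a b, dotc m (f t) (w t) = ∫ t in Ioc a b, dotc m (u t) (g t) := by
    have hsub : ∫ t in Ioc a b, (dotc m (f t) (w t) - dotc m (u t) (g t)) = 0 := by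
      rw [integral_congr_ae hae, integral_sub hint1 hint2, hz1, hz2, sub_zero]
    have h2 := integral_sub hfw hug
    exact sub_eq_zero.mp (h2.symm.trans hsub)
  have hsupp_fw : Function.support (fun x => dotc m (f x) (w x)) ⊆ Ioc a b := by
    intro x hx
    by_contra hnot
    have hw0 : w x = 0 := image_eq_zero_of_notMem_tsupport
      (fun hmem => hnot (Ioo_subset_Ioc_self (hsupw hmem)))
    exact hx (by simp [dotc, hw0])
  have hsupp_ug : Function.support (fun x => dotc m (u x) (g x)) ⊆ Ioc a b := by
    intro x hx
    by_contra hnot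
    have hu0 : u x = 0 := image_eq_zero_of_notMem_tsupport
      (fun hmem => hnot (Ioo_subset_Ioc_self (hsupu hmem)))
    exact hx (by simp [dotc, hu0])
  have e1 : ∫ x, dotc m (f x) (w x) = ∫ x in Ioc a b, dotc m (f x) (w x) := by
    rw [← integral_indicator measurableSet_Ioc, Set.indicator_eq_self.2 hsupp_fw]
  have e2 : ∫ x, dotc m (u x) (g x) = ∫ x in Ioc a b, dotc m (u x) (g x) := by
    rw [← integral_indicator measurableSet_Ioc, Set.indicator_eq_self.2 hsupp_ug]
  rw [e1, e2]
  exact hIoc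

end Aux

/-- With a self-adjoint matrix potential the preminimal operator is symmetric;
in particular so is its closure `L₀`. -/
theorem stmt1 (m : ℕ) (hm : 1 ≤ m) (Q s : ℝ → Matrix (Fin m) (Fin m) ℂ)
    (hQ : LocL2 m Q) (hs : LocL1 m s)
    (hQsa : ∀ᵐ x : ℝ ∂(volume), (Q x)ᴴ = Q x)
    (hssa : ∀ᵐ x : ℝ ∂(volume), (s x)ᴴ = s x) :
    (∀ p ∈ G00 m Q s, ∀ q ∈ G00 m Q s,
        pairing m (⇑p.2) (⇑q.1) = pairing m (⇑p.1) (⇑q.2)) ∧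
    (∀ p ∈ closure (G00 m Q s), ∀ q ∈ closure (G00 m Q s),
        pairing m (⇑p.2) (⇑q.1) = pairing m (⇑p.1) (⇑q.2)) := by
  -- auxiliary: pairing equals L^2 inner product
  have hpair : ∀ x y : L2m m, pairing m (⇑x) (⇑y) = (inner ℂ y x : ℂ) := by
    intro x y
    rw [pairing, MeasureTheory.L2.inner_def]
    congr 1
  have part1 : ∀ p ∈ G00 m Q s, ∀ q ∈ G00 m Q s,
      pairing m (⇑p.2) (⇑q.1) = pairing m (⇑p.1) (⇑q.2) := by
    intro p hp q hq
    obtain ⟨u, u1, f, hlu, hcu, hup, hfp⟩ := hp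
    obtain ⟨w, w1, g, hlw, hcw, hwq, hgq⟩ := hq
    have e1 : pairing m (⇑p.2) (⇑q.1) = ∫ x, dotc m (f x) (w x) := by
      refine integral_congr_ae ?_
      filter_upwards [hfp, hwq] with x h1 h2
      rw [← h1, ← h2]
    have e2 : pairing m (⇑p.1) (⇑q.2) = ∫ x, dotc m (u x) (g x) := by
      refine integral_congr_ae ?_
      filter_upwards [hup, hgq] with x h1 h2
      rw [← h1, ← h2]
    rw [e1, e2]
    exact core_sym m Q s hQ hs hQsa hssa u u1 f w w1 g hlu hlw hcu hcw
  refine ⟨part1, ?_⟩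
  intro p hp q hq
  have hcont : Continuous fun z : (L2m m × L2m m) × (L2m m × L2m m) =>
      ((inner ℂ z.2.1 z.1.2 : ℂ) - inner ℂ z.2.2 z.1.1) :=
    (Continuous.inner (continuous_snd.fst) (continuous_fst.snd)).sub
      (Continuous.inner (continuous_snd.snd) (continuous_fst.fst))
  have hzero : ∀ z ∈ closure ((G00 m Q s) ×ˢ (G00 m Q s)),
      ((inner ℂ z.2.1 z.1.2 : ℂ) - inner ℂ z.2.2 z.1.1) = 0 := by
    refine fun z hz => closure_minimal ?_ (isClosed_eq hcont continuous_const) hz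
    rintro ⟨p', q'⟩ ⟨hp', hq'⟩
    have := part1 p' hp' q' hq'
    rw [hpair, hpair] at this
    simpa [sub_eq_zero] using this
  have hmem : (p, q) ∈ closure ((G00 m Q s) ×ˢ (G00 m Q s)) := by
    rw [closure_prod_eq]
    exact ⟨hp, hq⟩
  have := hzero (p, q) hmem
  rw [hpair, hpair]
  simpa [sub_eq_zero] using this
end
end

section
/- (Lagrange identity on a finite interval.) Let (u,u1) be an l-pair with output f and (v,v1) an l⁺-pair with output g. Then for every finite interval [a,b]: ∫_a^b (f(x), v(x)) dx − ∫_a^b (u(x), g(x)) dx = [u,v](b) − [u,v](a), where [u,v](t) := (u(t), v1(t)) − (u1(t), v(t)). -/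
open MeasureTheory Matrix Filter Topology

noncomputable section

section Helpers

open intervalIntegral

lemma dotc_add_left_s4 (m : ℕ) (x y z : Em m) : dotc m (x + y) z = dotc m x z + dotc m y z := by
  simp [dotc, add_mul, Finset.sum_add_distrib]

lemma dotc_sub_left_s4 (m : ℕ) (x y z : Em m) : dotc m (x - y) z = dotc m x z - dotc m y z := by
  simp [dotc, sub_mul, Finset.sum_sub_distrib]

lemma dotc_add_right_s4 (m : ℕ) (x y z : Em m) : dotc m x (y + z) = dotc m x y + dotc m x z := by
  simp [dotc, mul_add, Finset.sum_add_distrib]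

lemma dotc_sub_right_s4 (m : ℕ) (x y z : Em m) : dotc m x (y - z) = dotc m x y - dotc m x z := by
  simp [dotc, mul_sub, Finset.sum_sub_distrib]

lemma mv_sub (m : ℕ) (A B : Matrix (Fin m) (Fin m) ℂ) (x : Em m) :
    mv m (A - B) x = mv m A x - mv m B x := by
  ext i; simp [mv, Matrix.sub_mulVec]

lemma mv_sq (m : ℕ) (A : Matrix (Fin m) (Fin m) ℂ) (x : Em m) :
    mv m (A ^ 2) x = mv m A (mv m A x) := by
  simp [mv, Matrix.mulVec_mulVec, sq]

lemma dotc_mv_adj (m : ℕ) (A : Matrix (Fin m) (Fin m) ℂ) (x y : Em m) :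
    dotc m (mv m A x) y = dotc m x (mv m Aᴴ y) := by
  simp only [dotc, mv, Matrix.mulVec, dotProduct, Matrix.conjTranspose_apply, map_sum,
    _root_.map_mul, Finset.sum_mul, Finset.mul_sum]
  rw [Finset.sum_comm]
  congr 1; ext i; congr 1; ext j
  simp only [RCLike.star_def, Complex.conj_conj]; ring

lemma key_fubini {a b : ℝ} (hab : a ≤ b) {φ ψ : ℝ → ℂ}
    (hφ : IntegrableOn φ (Set.Ioc a b)) (hψ : IntegrableOn ψ (Set.Ioc a b)) :
    (∫ x in a..b, φ x * (∫ t in a..x, ψ t)) + (∫ x in a..b, (∫ t in a..x, φ t) * ψ x)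
      = (∫ x in a..b, φ x) * (∫ x in a..b, ψ x) := by
  set μ := volume.restrict (Set.Ioc a b) with hμ
  set H : ℝ × ℝ → ℂ := fun p => φ p.1 * ψ p.2 with hH
  have hHint : Integrable H (μ.prod μ) := hφ.mul_prod hψ
  set R1 : Set (ℝ × ℝ) := {p | p.2 ≤ p.1} with hR1
  set R2 : Set (ℝ × ℝ) := {p | p.1 < p.2} with hR2
  have hR1m : MeasurableSet R1 := measurableSet_le measurable_snd measurable_fst
  have hR2m : MeasurableSet R2 := measurableSet_lt measurable_fst measurable_snd
  have e1 := MeasureTheory.integral_integral (μ := μ) (ν := μ)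
    (f := fun x t => R1.indicator H (x, t)) (by exact hHint.indicator hR1m)
  have t1 : (∫ x in a..b, φ x * (∫ t in a..x, ψ t)) = ∫ p, R1.indicator H p ∂(μ.prod μ) := by
    rw [intervalIntegral.integral_of_le hab]
    rw [show (∫ p, R1.indicator H p ∂(μ.prod μ)) = ∫ p, R1.indicator H (p.1, p.2) ∂(μ.prod μ)
        from rfl, ← e1]
    refine setIntegral_congr_fun measurableSet_Ioc (fun x hx => ?_)
    rw [intervalIntegral.integral_of_le hx.1.le]
    rw [← MeasureTheory.integral_const_mul]
    have hind : (fun y => R1.indicator H (x, y)) = (Set.Iic x).indicator (fun y => φ x * ψ y) := by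
      funext y
      by_cases h : y ≤ x
      · rw [Set.indicator_of_mem (by exact h), Set.indicator_of_mem (by exact h)]
      · rw [Set.indicator_of_notMem (by exact h), Set.indicator_of_notMem (by exact h)]
    rw [hμ]
    show _ = ∫ y in Set.Ioc a b, R1.indicator H (x, y)
    rw [show (fun y => R1.indicator H (x, y)) = (Set.Iic x).indicator (fun y => φ x * ψ y) from hind,
      MeasureTheory.setIntegral_indicator measurableSet_Iic, Set.Ioc_inter_Iic,
      min_eq_right hx.2]
  have hswap : Integrable (fun p : ℝ × ℝ => R2.indicator H (p.2, p.1)) (μ.prod μ) := by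
    have : Integrable ((R2.indicator H) ∘ Prod.swap) (μ.prod μ) :=
      (hHint.indicator hR2m).swap
    exact this
  have e2 := MeasureTheory.integral_integral_swap (μ := μ) (ν := μ)
    (f := fun x t => R2.indicator H (t, x)) (by exact hswap)
  have e3 := MeasureTheory.integral_integral (μ := μ) (ν := μ)
    (f := fun t x => R2.indicator H (t, x)) (by exact hHint.indicator hR2m)
  have t2 : (∫ x in a..b, (∫ t in a..x, φ t) * ψ x) = ∫ p, R2.indicator H p ∂(μ.prod μ) := by
    rw [intervalIntegral.integral_of_le hab]
    have : (∫ p, R2.indicator H p ∂(μ.prod μ)) = ∫ x, ∫ t, R2.indicator H (t, x) ∂μ ∂μ := by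
      rw [e2, e3]
    rw [this]
    refine setIntegral_congr_fun measurableSet_Ioc (fun x hx => ?_)
    rw [intervalIntegral.integral_of_le hx.1.le, MeasureTheory.integral_Ioc_eq_integral_Ioo]
    rw [← MeasureTheory.integral_mul_const]
    have hind : (fun t => R2.indicator H (t, x)) = (Set.Iio x).indicator (fun t => φ t * ψ x) := by
      funext t
      by_cases h : t < x
      · rw [Set.indicator_of_mem (by exact h), Set.indicator_of_mem (by exact h)]
      · rw [Set.indicator_of_notMem (by exact h), Set.indicator_of_notMem (by exact h)]
    rw [hμ]
    show _ = ∫ t in Set.Ioc a b, R2.indicator H (t, x)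
    rw [show (fun t => R2.indicator H (t, x)) = (Set.Iio x).indicator (fun t => φ t * ψ x) from hind,
      MeasureTheory.setIntegral_indicator measurableSet_Iio,
      show Set.Ioc a b ∩ Set.Iio x = Set.Ioo a x by
        ext t
        simp only [Set.mem_inter_iff, Set.mem_Ioc, Set.mem_Iio, Set.mem_Ioo]
        exact ⟨fun h => ⟨h.1.1, h.2⟩, fun h => ⟨⟨h.1, h.2.le.trans hx.2⟩, h.2⟩⟩]
  rw [t1, t2, ← MeasureTheory.integral_add (hHint.indicator hR1m) (hHint.indicator hR2m)]
  have : ∀ p : ℝ × ℝ, R1.indicator H p + R2.indicator H p = H p := by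
    intro p
    by_cases h : p.2 ≤ p.1
    · rw [Set.indicator_of_mem (by exact h), Set.indicator_of_notMem (by exact not_lt.2 h),
        add_zero]
    · rw [Set.indicator_of_notMem (by exact h),
        Set.indicator_of_mem (by exact not_le.1 h), zero_add]
  simp_rw [this]
  rw [intervalIntegral.integral_of_le hab, intervalIntegral.integral_of_le hab]
  exact MeasureTheory.integral_prod_mul φ ψ

lemma prodRule {a b : ℝ} (hab : a ≤ b) {A B p q : ℝ → ℂ}
    (hp : IntegrableOn p (Set.Ioc a b)) (hq : IntegrableOn q (Set.Ioc a b))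
    (hA : ∀ x ∈ Set.Icc a b, A x = A a + ∫ t in a..x, p t)
    (hB : ∀ x ∈ Set.Icc a b, B x = B a + ∫ t in a..x, q t) :
    (∫ x in a..b, (p x * B x + A x * q x)) = A b * B b - A a * B a := by
  set Φ : ℝ → ℂ := fun x => ∫ t in a..x, p t with hΦ
  set Ψ : ℝ → ℂ := fun x => ∫ t in a..x, q t with hΨ
  have hpIcc : IntegrableOn p (Set.Icc a b) := by
    rwa [integrableOn_Icc_iff_integrableOn_Ioc]
  have hqIcc : IntegrableOn q (Set.Icc a b) := by
    rwa [integrableOn_Icc_iff_integrableOn_Ioc]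
  have hΦc : ContinuousOn Φ (Set.Icc a b) := by
    have := intervalIntegral.continuousOn_primitive_interval
      (a := a) (b := b) (f := p) (μ := volume) (by rwa [Set.uIcc_of_le hab])
    rwa [Set.uIcc_of_le hab] at this
  have hΨc : ContinuousOn Ψ (Set.Icc a b) := by
    have := intervalIntegral.continuousOn_primitive_interval
      (a := a) (b := b) (f := q) (μ := volume) (by rwa [Set.uIcc_of_le hab])
    rwa [Set.uIcc_of_le hab] at this
  obtain ⟨CΦ, hCΦ⟩ := isCompact_Icc.exists_bound_of_continuousOn hΦc
  obtain ⟨CΨ, hCΨ⟩ := isCompact_Icc.exists_bound_of_continuousOn hΨc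
  have hmono : volume.restrict (Set.Ioc a b) ≤ volume.restrict (Set.Icc a b) :=
    Measure.restrict_mono Set.Ioc_subset_Icc_self le_rfl
  have hΦm : AEStronglyMeasurable Φ (volume.restrict (Set.Ioc a b)) :=
    (hΦc.aestronglyMeasurable measurableSet_Icc).mono_measure hmono
  have hΨm : AEStronglyMeasurable Ψ (volume.restrict (Set.Ioc a b)) :=
    (hΨc.aestronglyMeasurable measurableSet_Icc).mono_measure hmono
  have hΦb : ∀ᵐ x ∂(volume.restrict (Set.Ioc a b)), ‖Φ x‖ ≤ CΦ := by
    filter_upwards [ae_restrict_mem measurableSet_Ioc] with x hx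
    exact hCΦ x (Set.Ioc_subset_Icc_self hx)
  have hΨb : ∀ᵐ x ∂(volume.restrict (Set.Ioc a b)), ‖Ψ x‖ ≤ CΨ := by
    filter_upwards [ae_restrict_mem measurableSet_Ioc] with x hx
    exact hCΨ x (Set.Ioc_subset_Icc_self hx)
  have i1 : IntegrableOn (fun x => p x * B a) (Set.Ioc a b) := hp.mul_const _
  have i3 : IntegrableOn (fun x => A a * q x) (Set.Ioc a b) := hq.const_mul _
  have i2 : IntegrableOn (fun x => p x * Ψ x) (Set.Ioc a b) := by
    have := hp.bdd_mul (c := CΨ) hΨm hΨb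
    exact this.congr (by filter_upwards with x using mul_comm _ _)
  have i4 : IntegrableOn (fun x => Φ x * q x) (Set.Ioc a b) :=
    hq.bdd_mul (c := CΦ) hΦm hΦb
  have step : (∫ x in a..b, (p x * B x + A x * q x)) =
      ∫ x in Set.Ioc a b, ((p x * B a + A a * q x) + (p x * Ψ x + Φ x * q x)) := by
    rw [intervalIntegral.integral_of_le hab]
    refine setIntegral_congr_fun measurableSet_Ioc (fun x hx => ?_)
    rw [hA x (Set.Ioc_subset_Icc_self hx), hB x (Set.Ioc_subset_Icc_self hx)]
    show p x * (B a + Ψ x) + (A a + Φ x) * q x = _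
    ring
  rw [step]
  rw [show (fun x => p x * B a + A a * q x + (p x * Ψ x + Φ x * q x)) =
      ((fun x => p x * B a) + fun x => A a * q x) + ((fun x => p x * Ψ x) + fun x => Φ x * q x)
    from rfl]
  rw [MeasureTheory.integral_add' (i1.add i3) (i2.add i4),
    MeasureTheory.integral_add' i1 i3, MeasureTheory.integral_add' i2 i4]
  rw [MeasureTheory.integral_mul_const, MeasureTheory.integral_const_mul]
  have hkey := key_fubini hab hp hq
  rw [intervalIntegral.integral_of_le hab] at hkey
  simp only [← intervalIntegral.integral_of_le hab] at *
  have hAb := hA b ⟨hab, le_rfl⟩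
  have hBb := hB b ⟨hab, le_rfl⟩
  rw [hkey]
  show Φ b * B a + A a * Ψ b + Φ b * Ψ b = _
  rw [hAb, hBb]; show _ = (A a + Φ b) * (B a + Ψ b) - A a * B a; ring

lemma coord_integrableOn (m : ℕ) {P : ℝ → Em m} {S : Set ℝ} (h : IntegrableOn P S volume)
    (i : Fin m) : IntegrableOn (fun t => P t i) S volume :=
  (EuclideanSpace.proj (𝕜 := ℂ) i).integrable_comp h

lemma coord_intervalIntegral (m : ℕ) {P : ℝ → Em m} {a x : ℝ}
    (h : IntervalIntegrable P volume a x) (i : Fin m) :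
    (∫ t in a..x, P t) i = ∫ t in a..x, P t i :=
  ((EuclideanSpace.proj (𝕜 := ℂ) i).intervalIntegral_comp_comm h).symm

lemma integrable_conj {f : ℝ → ℂ} {μ : Measure ℝ} (h : Integrable f μ) :
    Integrable (fun x => (starRingEnd ℂ) (f x)) μ := by
  refine h.mono (Complex.continuous_conj.comp_aestronglyMeasurable h.1) ?_
  filter_upwards with x; simp

lemma intervalIntegral_conj {f : ℝ → ℂ} {a x : ℝ} :
    (∫ t in a..x, (starRingEnd ℂ) (f t)) = (starRingEnd ℂ) (∫ t in a..x, f t) := by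
  simp [intervalIntegral, ← integral_conj, map_sub]

lemma contOn_of_primitive {E : Type*} [NormedAddCommGroup E] [NormedSpace ℝ E]
    {a b : ℝ} (hab : a ≤ b) {W R : ℝ → E} (hR : IntegrableOn R (Set.Ioc a b) volume)
    (hW : ∀ x ∈ Set.Icc a b, W x = W a + ∫ t in a..x, R t) :
    ContinuousOn W (Set.Icc a b) := by
  have hRIcc : IntegrableOn R (Set.Icc a b) volume := by
    rwa [integrableOn_Icc_iff_integrableOn_Ioc]
  have h1 : ContinuousOn (fun x => W a + ∫ t in a..x, R t) (Set.Icc a b) := by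
    refine continuousOn_const.add ?_
    have := intervalIntegral.continuousOn_primitive_interval
      (a := a) (b := b) (f := R) (μ := volume) (by rwa [Set.uIcc_of_le hab])
    rwa [Set.uIcc_of_le hab] at this
  exact h1.congr hW

lemma mul_cont_integrable {a b : ℝ} {p w : ℝ → ℂ}
    (hp : IntegrableOn p (Set.Ioc a b) volume) (hw : ContinuousOn w (Set.Icc a b)) :
    IntegrableOn (fun x => p x * w x) (Set.Ioc a b) volume := by
  obtain ⟨C, hC⟩ := isCompact_Icc.exists_bound_of_continuousOn hw
  have hmono : volume.restrict (Set.Ioc a b) ≤ volume.restrict (Set.Icc a b) :=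
    Measure.restrict_mono Set.Ioc_subset_Icc_self le_rfl
  have hm : AEStronglyMeasurable w (volume.restrict (Set.Ioc a b)) :=
    (hw.aestronglyMeasurable measurableSet_Icc).mono_measure hmono
  have hb : ∀ᵐ x ∂(volume.restrict (Set.Ioc a b)), ‖w x‖ ≤ C := by
    filter_upwards [ae_restrict_mem measurableSet_Ioc] with x hx
    exact hC x (Set.Ioc_subset_Icc_self hx)
  have := hp.bdd_mul (c := C) hm hb
  exact this.congr (by filter_upwards with x using mul_comm _ _)

lemma vecRule (m : ℕ) {a b : ℝ} (hab : a ≤ b) {U W P R : ℝ → Em m}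
    (hP : IntegrableOn P (Set.Ioc a b) volume) (hR : IntegrableOn R (Set.Ioc a b) volume)
    (hU : ∀ x ∈ Set.Icc a b, U x = U a + ∫ t in a..x, P t)
    (hW : ∀ x ∈ Set.Icc a b, W x = W a + ∫ t in a..x, R t) :
    (∫ x in a..b, (dotc m (P x) (W x) + dotc m (U x) (R x)))
      = dotc m (U b) (W b) - dotc m (U a) (W a) := by
  have hUc : ContinuousOn U (Set.Icc a b) := contOn_of_primitive hab hP hU
  have hWc : ContinuousOn W (Set.Icc a b) := contOn_of_primitive hab hR hW
  have hcoordU : ∀ (i : Fin m), ∀ x ∈ Set.Icc a b, U x i = U a i + ∫ t in a..x, P t i := by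
    intro i x hx
    have h1 := congrArg (fun z : Em m => z i) (hU x hx)
    simp only at h1
    rw [h1]
    have hint : IntervalIntegrable P volume a x :=
      (intervalIntegrable_iff_integrableOn_Ioc_of_le hx.1).2
        (hP.mono_set (Set.Ioc_subset_Ioc_right hx.2))
    rw [show (U a + ∫ t in a..x, P t) i = U a i + (∫ t in a..x, P t) i from rfl,
      coord_intervalIntegral m hint i]
  have hcoordW : ∀ (i : Fin m), ∀ x ∈ Set.Icc a b,
      (starRingEnd ℂ) (W x i) = (starRingEnd ℂ) (W a i)
        + ∫ t in a..x, (starRingEnd ℂ) (R t i) := by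
    intro i x hx
    have h1 := congrArg (fun z : Em m => z i) (hW x hx)
    simp only at h1
    rw [h1]
    have hint : IntervalIntegrable R volume a x :=
      (intervalIntegrable_iff_integrableOn_Ioc_of_le hx.1).2
        (hR.mono_set (Set.Ioc_subset_Ioc_right hx.2))
    rw [show (W a + ∫ t in a..x, R t) i = W a i + (∫ t in a..x, R t) i from rfl,
      coord_intervalIntegral m hint i, map_add, intervalIntegral_conj]
  have per_i : ∀ i : Fin m,
      (∫ x in a..b, (P x i * (starRingEnd ℂ) (W x i) + U x i * (starRingEnd ℂ) (R x i)))
        = U b i * (starRingEnd ℂ) (W b i) - U a i * (starRingEnd ℂ) (W a i) := by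
    intro i
    exact prodRule hab (coord_integrableOn m hP i) (integrable_conj (coord_integrableOn m hR i))
      (hcoordU i) (hcoordW i)
  have hinteg : ∀ i : Fin m, IntervalIntegrable
      (fun x => P x i * (starRingEnd ℂ) (W x i) + U x i * (starRingEnd ℂ) (R x i))
      volume a b := by
    intro i
    refine (intervalIntegrable_iff_integrableOn_Ioc_of_le hab).2 (Integrable.add ?_ ?_)
    · exact mul_cont_integrable (coord_integrableOn m hP i)
        ((Complex.continuous_conj.comp_continuousOn
          ((EuclideanSpace.proj (𝕜 := ℂ) i).continuous.comp_continuousOn hWc)))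
    · have := mul_cont_integrable (integrable_conj (coord_integrableOn m hR i))
        ((EuclideanSpace.proj (𝕜 := ℂ) i).continuous.comp_continuousOn hUc)
      exact this.congr (by filter_upwards with x using mul_comm _ _)
  have expand : (fun x => dotc m (P x) (W x) + dotc m (U x) (R x))
      = fun x => ∑ i : Fin m,
          (P x i * (starRingEnd ℂ) (W x i) + U x i * (starRingEnd ℂ) (R x i)) := by
    funext x; simp [dotc, Finset.sum_add_distrib]
  rw [expand, intervalIntegral.integral_finset_sum (fun i _ => hinteg i)]
  simp only [per_i]
  rw [dotc, dotc, ← Finset.sum_sub_distrib]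

lemma integrableOn_of_coords (m : ℕ) {F : ℝ → Em m} {S : Set ℝ}
    (h : ∀ i, IntegrableOn (fun t => F t i) S volume) : IntegrableOn F S volume := by
  have hrepr : F = fun t => ∑ i : Fin m, (F t i) • (EuclideanSpace.single i (1 : ℂ)) := by
    funext t
    ext j
    rw [show (∑ i : Fin m, F t i • EuclideanSpace.single i (1 : ℂ)) j
        = ∑ i : Fin m, (F t i • EuclideanSpace.single i (1 : ℂ)) j from
      by simp only [WithLp.ofLp_sum, Finset.sum_apply]]
    simp [EuclideanSpace.single_apply]
  rw [hrepr]
  exact integrable_finset_sum _ (fun i _ => (h i).smul_const _)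

lemma mv_integrableOn (m : ℕ) {M : ℝ → Matrix (Fin m) (Fin m) ℂ} {w : ℝ → Em m} {a b : ℝ}
    (hM : ∀ i j, IntegrableOn (fun t => M t i j) (Set.Ioc a b) volume) (hw : Continuous w) :
    IntegrableOn (fun t => mv m (M t) (w t)) (Set.Ioc a b) volume := by
  refine integrableOn_of_coords m (fun i => ?_)
  have hco : (fun t => mv m (M t) (w t) i) = fun t => ∑ j, M t i j * w t j := by
    funext t; simp [mv, Matrix.mulVec, dotProduct]
  rw [hco]
  exact integrable_finset_sum _ fun j _ => mul_cont_integrable (hM i j)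
    (((EuclideanSpace.proj (𝕜 := ℂ) j).continuous.comp hw).continuousOn)

lemma dotc_int_left (m : ℕ) {F G : ℝ → Em m} {a b : ℝ}
    (hF : IntegrableOn F (Set.Ioc a b) volume) (hG : Continuous G) :
    IntegrableOn (fun x => dotc m (F x) (G x)) (Set.Ioc a b) volume := by
  have : (fun x => dotc m (F x) (G x))
      = fun x => ∑ i : Fin m, F x i * (starRingEnd ℂ) (G x i) := by
    funext x; rfl
  rw [this]
  exact integrable_finset_sum _ fun i _ => mul_cont_integrable (coord_integrableOn m hF i)
    ((Complex.continuous_conj.comp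
      ((EuclideanSpace.proj (𝕜 := ℂ) i).continuous.comp hG)).continuousOn)

lemma dotc_int_right (m : ℕ) {F G : ℝ → Em m} {a b : ℝ}
    (hF : Continuous F) (hG : IntegrableOn G (Set.Ioc a b) volume) :
    IntegrableOn (fun x => dotc m (F x) (G x)) (Set.Ioc a b) volume := by
  have : (fun x => dotc m (F x) (G x))
      = fun x => ∑ i : Fin m, F x i * (starRingEnd ℂ) (G x i) := by
    funext x; rfl
  rw [this]
  refine integrable_finset_sum _ fun i _ => ?_
  have := mul_cont_integrable (integrable_conj (coord_integrableOn m hG i))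
    (((EuclideanSpace.proj (𝕜 := ℂ) i).continuous.comp hF).continuousOn)
  exact this.congr (by filter_upwards with x using mul_comm _ _)

lemma lagrange_pointwise_s4 (m : ℕ) (Qx sx : Matrix (Fin m) (Fin m) ℂ)
    (ux u1x vx v1x fx gx : Em m) :
    (dotc m (mv m Qx ux + u1x) v1x
        + dotc m ux (mv m (sxᴴ - Qxᴴ ^ 2) vx - mv m Qxᴴ v1x - gx))
      - (dotc m (mv m (sx - Qx ^ 2) ux - mv m Qx u1x - fx) vx
        + dotc m u1x (mv m Qxᴴ vx + v1x))
      = dotc m fx vx - dotc m ux gx := by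
  have hQH2 : Qxᴴ ^ 2 = (Qx ^ 2)ᴴ := by
    rw [pow_two, pow_two, ← Matrix.conjTranspose_mul]
  rw [hQH2]
  simp only [mv_sub, dotc_add_left_s4, dotc_sub_left_s4, dotc_add_right_s4, dotc_sub_right_s4,
    ← dotc_mv_adj]
  ring

end Helpers

/-- Lagrange identity on a finite interval. -/
theorem stmt4 (m : ℕ) (hm : 1 ≤ m) (Q s : ℝ → Matrix (Fin m) (Fin m) ℂ)
    (hQ : LocL2 m Q) (hs : LocL1 m s)
    (u u1 f v v1 g : ℝ → Em m)
    (hu : IsLpair m Q s u u1 f) (hv : IsLplusPair m Q s v v1 g) :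
    ∀ a b : ℝ, a ≤ b →
      (∫ x in a..b, dotc m (f x) (v x)) - (∫ x in a..b, dotc m (u x) (g x)) =
        (dotc m (u b) (v1 b) - dotc m (u1 b) (v b)) -
          (dotc m (u a) (v1 a) - dotc m (u1 a) (v a)) := by
  intro a b hab
  obtain ⟨hfl, huc, hu1c, hueq, hu1eq⟩ := hu
  obtain ⟨hgl, hvc, hv1c, hveq, hv1eq⟩ := hv
  haveI hfin : IsFiniteMeasure (volume.restrict (Set.Icc a b)) :=
    ⟨by rw [Measure.restrict_apply_univ]; exact measure_Icc_lt_top⟩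
  have hmono : volume.restrict (Set.Ioc a b) ≤ volume.restrict (Set.Icc a b) :=
    Measure.restrict_mono Set.Ioc_subset_Icc_self le_rfl
  -- entrywise integrability
  have hQe : ∀ i j, IntegrableOn (fun t => Q t i j) (Set.Ioc a b) volume := fun i j =>
    ((hQ i j _ isCompact_Icc).integrable (by norm_num)).mono_measure hmono
  have hQ2e : ∀ i j, IntegrableOn (fun t => (Q t ^ 2) i j) (Set.Ioc a b) volume := by
    intro i j
    have h2 : ∀ k : Fin m, Integrable (fun t => Q t i k * Q t k j)
        (volume.restrict (Set.Icc a b)) := by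
      intro k
      have hm := MemLp.smul (μ := volume.restrict (Set.Icc a b))
        (hQ k j (Set.Icc a b) isCompact_Icc) (hQ i k (Set.Icc a b) isCompact_Icc)
        (p := 2) (q := 2) (r := 1)
      have := memLp_one_iff_integrable.mp hm
      exact this
    have hrw : (fun t => (Q t ^ 2) i j) = fun t => ∑ k, Q t i k * Q t k j := by
      funext t; rw [pow_two, Matrix.mul_apply]
    rw [hrw]
    exact (integrable_finset_sum _ fun k _ => h2 k).mono_measure hmono
  have hse : ∀ i j, IntegrableOn (fun t => s t i j) (Set.Ioc a b) volume := fun i j =>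
    ((hs i j).integrableOn_isCompact isCompact_Icc).mono_set Set.Ioc_subset_Icc_self
  have hQHe : ∀ i j, IntegrableOn (fun t => (Q t)ᴴ i j) (Set.Ioc a b) volume := by
    intro i j
    have hrw : (fun t => (Q t)ᴴ i j) = fun t => (starRingEnd ℂ) (Q t j i) := by
      funext t; simp [Matrix.conjTranspose_apply, RCLike.star_def]
    rw [hrw]; exact integrable_conj (hQe j i)
  have hQH2e : ∀ i j, IntegrableOn (fun t => ((Q t)ᴴ ^ 2) i j) (Set.Ioc a b) volume := by
    intro i j
    have hrw : (fun t => ((Q t)ᴴ ^ 2) i j) = fun t => (starRingEnd ℂ) ((Q t ^ 2) j i) := by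
      funext t
      rw [show (Q t)ᴴ ^ 2 = (Q t ^ 2)ᴴ by rw [pow_two, pow_two, ← Matrix.conjTranspose_mul]]
      simp [Matrix.conjTranspose_apply, RCLike.star_def]
    rw [hrw]; exact integrable_conj (hQ2e j i)
  have hsHe : ∀ i j, IntegrableOn (fun t => (s t)ᴴ i j) (Set.Ioc a b) volume := by
    intro i j
    have hrw : (fun t => (s t)ᴴ i j) = fun t => (starRingEnd ℂ) (s t j i) := by
      funext t; simp [Matrix.conjTranspose_apply, RCLike.star_def]
    rw [hrw]; exact integrable_conj (hse j i)
  have hsQ2e : ∀ i j, IntegrableOn (fun t => (s t - Q t ^ 2) i j) (Set.Ioc a b) volume := by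
    intro i j
    have hrw : (fun t => (s t - Q t ^ 2) i j)
        = fun t => s t i j - (Q t ^ 2) i j := by
      funext t; simp [Matrix.sub_apply]
    rw [hrw]; exact (hse i j).sub (hQ2e i j)
  have hsQ2He : ∀ i j, IntegrableOn (fun t => ((s t)ᴴ - (Q t)ᴴ ^ 2) i j) (Set.Ioc a b) volume := by
    intro i j
    have hrw : (fun t => ((s t)ᴴ - (Q t)ᴴ ^ 2) i j)
        = fun t => (s t)ᴴ i j - ((Q t)ᴴ ^ 2) i j := by
      funext t; simp [Matrix.sub_apply]
    rw [hrw]; exact (hsHe i j).sub (hQH2e i j)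
  -- vector integrability
  have hfS : IntegrableOn f (Set.Ioc a b) volume :=
    (hfl.integrableOn_isCompact isCompact_Icc).mono_set Set.Ioc_subset_Icc_self
  have hgS : IntegrableOn g (Set.Ioc a b) volume :=
    (hgl.integrableOn_isCompact isCompact_Icc).mono_set Set.Ioc_subset_Icc_self
  have hPint : IntegrableOn (fun t => mv m (Q t) (u t) + u1 t) (Set.Ioc a b) volume :=
    (mv_integrableOn m hQe huc).add (hu1c.integrableOn_Ioc)
  have hP1int : IntegrableOn
      (fun t => mv m (s t - Q t ^ 2) (u t) - mv m (Q t) (u1 t) - f t) (Set.Ioc a b) volume :=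
    ((mv_integrableOn m hsQ2e huc).sub (mv_integrableOn m hQe hu1c)).sub hfS
  have hRint : IntegrableOn (fun t => mv m (Q t)ᴴ (v t) + v1 t) (Set.Ioc a b) volume :=
    (mv_integrableOn m hQHe hvc).add (hv1c.integrableOn_Ioc)
  have hR1int : IntegrableOn
      (fun t => mv m ((s t)ᴴ - (Q t)ᴴ ^ 2) (v t) - mv m (Q t)ᴴ (v1 t) - g t)
      (Set.Ioc a b) volume :=
    ((mv_integrableOn m hsQ2He hvc).sub (mv_integrableOn m hQHe hv1c)).sub hgS
  -- the two applications of the product rule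
  have eq1 := vecRule m hab hPint hR1int (fun x _ => hueq a x) (fun x _ => hv1eq a x)
  have eq2 := vecRule m hab hP1int hRint (fun x _ => hu1eq a x) (fun x _ => hveq a x)
  -- interval integrability of all four integrands
  have hI1 : IntervalIntegrable
      (fun x => dotc m (mv m (Q x) (u x) + u1 x) (v1 x)
        + dotc m (u x) (mv m ((s x)ᴴ - (Q x)ᴴ ^ 2) (v x) - mv m (Q x)ᴴ (v1 x) - g x))
      volume a b :=
    (intervalIntegrable_iff_integrableOn_Ioc_of_le hab).2
      ((dotc_int_left m hPint hv1c).add (dotc_int_right m huc hR1int))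
  have hI2 : IntervalIntegrable
      (fun x => dotc m (mv m (s x - Q x ^ 2) (u x) - mv m (Q x) (u1 x) - f x) (v x)
        + dotc m (u1 x) (mv m (Q x)ᴴ (v x) + v1 x))
      volume a b :=
    (intervalIntegrable_iff_integrableOn_Ioc_of_le hab).2
      ((dotc_int_left m hP1int hvc).add (dotc_int_right m hu1c hRint))
  have hfv : IntervalIntegrable (fun x => dotc m (f x) (v x)) volume a b :=
    (intervalIntegrable_iff_integrableOn_Ioc_of_le hab).2 (dotc_int_left m hfS hvc)
  have hug : IntervalIntegrable (fun x => dotc m (u x) (g x)) volume a b :=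
    (intervalIntegrable_iff_integrableOn_Ioc_of_le hab).2 (dotc_int_right m huc hgS)
  have hRHS : (dotc m (u b) (v1 b) - dotc m (u1 b) (v b))
      - (dotc m (u a) (v1 a) - dotc m (u1 a) (v a))
      = (∫ x in a..b, (dotc m (mv m (Q x) (u x) + u1 x) (v1 x)
          + dotc m (u x) (mv m ((s x)ᴴ - (Q x)ᴴ ^ 2) (v x) - mv m (Q x)ᴴ (v1 x) - g x)))
        - (∫ x in a..b, (dotc m (mv m (s x - Q x ^ 2) (u x) - mv m (Q x) (u1 x) - f x) (v x)
          + dotc m (u1 x) (mv m (Q x)ᴴ (v x) + v1 x))) := by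
    rw [eq1, eq2]; ring
  rw [hRHS, ← intervalIntegral.integral_sub hfv hug, ← intervalIntegral.integral_sub hI1 hI2]
  apply intervalIntegral.integral_congr
  intro x _
  exact (lagrange_pointwise_s4 m (Q x) (s x) (u x) (u1 x) (v x) (v1 x) (f x) (g x)).symm
end
end

section
/- Let h : ℝ → [0,∞) be integrable. If there exists a constant C > 0 such that for every n ∈ ℕ: ∫_{-n}^{n} h(x) dx ≤ C² · ∫_{{x : n ≤ |x| ≤ n+1}} h(x) dx, then h = 0 almost everywhere. -/
open MeasureTheory Matrix Filter Topology

noncomputable section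

/-- An integrable nonnegative function satisfying
`∫_{-n}^{n} h ≤ C² ∫_{n ≤ |x| ≤ n+1} h` for all `n` vanishes a.e. -/
theorem stmt14 (h : ℝ → ℝ) (hnn : ∀ x : ℝ, 0 ≤ h x)
    (hint : Integrable h (volume : Measure ℝ))
    (C : ℝ) (hC : 0 < C)
    (hineq : ∀ n : ℕ, (∫ x in (-(n : ℝ))..(n : ℝ), h x) ≤
      C ^ 2 * ∫ x in {x : ℝ | (n : ℝ) ≤ |x| ∧ |x| ≤ (n : ℝ) + 1}, h x) :
    h =ᵐ[volume] (0 : ℝ → ℝ) := by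
  have hlim1 : Tendsto (fun n : ℕ => ∫ x in (-(n : ℝ))..(n : ℝ), h x) atTop
      (𝓝 (∫ x, h x)) :=
    intervalIntegral_tendsto_integral hint
      (tendsto_neg_atTop_atBot.comp tendsto_natCast_atTop_atTop)
      tendsto_natCast_atTop_atTop
  have hlim2 : Tendsto (fun n : ℕ => ∫ x in (-((n : ℝ) + 1))..((n : ℝ) + 1), h x) atTop
      (𝓝 (∫ x, h x)) :=
    intervalIntegral_tendsto_integral hint
      (tendsto_neg_atTop_atBot.comp (tendsto_atTop_add_const_right _ 1 tendsto_natCast_atTop_atTop))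
      (tendsto_atTop_add_const_right _ 1 tendsto_natCast_atTop_atTop)
  have hset : ∀ n : ℕ, {x : ℝ | (n : ℝ) ≤ |x| ∧ |x| ≤ (n : ℝ) + 1} =
      Set.Icc (-((n : ℝ) + 1)) ((n : ℝ) + 1) \ Set.Ioo (-(n : ℝ)) (n : ℝ) := by
    intro n
    ext x
    simp only [Set.mem_setOf_eq, Set.mem_diff, Set.mem_Icc, Set.mem_Ioo, abs_le, le_abs,
      le_neg, not_and_or, not_lt, neg_lt]
    constructor
    · rintro ⟨h1 | h1, h2, h3⟩
      · exact ⟨⟨h2, h3⟩, Or.inr h1⟩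
      · exact ⟨⟨h2, h3⟩, Or.inl (by linarith)⟩
    · rintro ⟨⟨h2, h3⟩, h1 | h1⟩
      · exact ⟨Or.inr (by linarith), h2, h3⟩
      · exact ⟨Or.inl h1, h2, h3⟩
  have heq : ∀ n : ℕ, (∫ x in {x : ℝ | (n : ℝ) ≤ |x| ∧ |x| ≤ (n : ℝ) + 1}, h x) =
      (∫ x in (-((n : ℝ) + 1))..((n : ℝ) + 1), h x) -
        ∫ x in (-(n : ℝ))..(n : ℝ), h x := by
    intro n
    have hn : (0 : ℝ) ≤ (n : ℝ) := Nat.cast_nonneg n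
    rw [hset n, MeasureTheory.integral_diff measurableSet_Ioo hint.integrableOn
      (Set.Ioo_subset_Icc_self.trans (Set.Icc_subset_Icc (by linarith) (by linarith)))]
    rw [intervalIntegral.integral_of_le (by linarith), intervalIntegral.integral_of_le (by linarith),
      MeasureTheory.integral_Icc_eq_integral_Ioc]
    simp only [MeasureTheory.integral_Ioc_eq_integral_Ioo]
  have hann : Tendsto (fun n : ℕ => ∫ x in {x : ℝ | (n : ℝ) ≤ |x| ∧ |x| ≤ (n : ℝ) + 1}, h x)
      atTop (𝓝 0) := by
    simp only [heq]
    have := hlim2.sub hlim1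
    simpa using this
  have hI0 : (∫ x, h x) ≤ 0 := by
    have hC2 : Tendsto (fun n : ℕ => C ^ 2 *
        ∫ x in {x : ℝ | (n : ℝ) ≤ |x| ∧ |x| ≤ (n : ℝ) + 1}, h x) atTop (𝓝 0) := by
      simpa using hann.const_mul (C ^ 2)
    exact le_of_tendsto_of_tendsto' hlim1 hC2 hineq
  have hI : (∫ x, h x) = 0 := le_antisymm hI0 (integral_nonneg hnn)
  exact (MeasureTheory.integral_eq_zero_iff_of_nonneg hnn hint).mp hI
end
end
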